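/- arXiv:2605.30807 — 2 statements merged into one kernel-verified Lean document; each statement's English description precedes it below -/
import Mathlib

section
/- Let E_1, ..., E_m, E_{m+1} be exchangeable real-valued random variables that are almost surely distinct. Define q to be the ⌈(m+1)(1-α)⌉-th smallest value among E_1,...,E_m. Then P(E_{m+1} ≤ q) ≤ 1 - α + 1/(m+1). -/
open MeasureTheory

open Finset

-- rank of index j among values v
noncomputable def rnk {n : ℕ} (v : Fin n → ℝ) (j : Fin n) : ℕ :=
  (Finset.univ.filter (fun i => v i < v j)).card

lemma rnk_lt {n : ℕ} (v : Fin n → ℝ) (j : Fin n) : rnk v j < n := by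
  have h : (Finset.univ.filter (fun i => v i < v j)) ⊆ Finset.univ.erase j := by
    intro i hi
    simp only [mem_filter, mem_univ, true_and] at hi
    exact Finset.mem_erase.2 ⟨fun h => absurd (h ▸ hi) (lt_irrefl _), mem_univ i⟩
  calc rnk v j ≤ (Finset.univ.erase j).card := Finset.card_le_card h
    _ < Finset.univ.card := Finset.card_erase_lt_of_mem (mem_univ j)
    _ = n := by simp

lemma rnk_inj {n : ℕ} (v : Fin n → ℝ) (hv : Function.Injective v) :
    Function.Injective (rnk v) := by
  have key : ∀ i j : Fin n, v i < v j → rnk v i < rnk v j := by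
    intro i j hij
    apply Finset.card_lt_card
    constructor
    · intro l hl
      simp only [mem_filter, mem_univ, true_and] at hl ⊢
      exact hl.trans hij
    · intro hsub
      have : i ∈ Finset.univ.filter (fun l => v l < v j) := by simp [hij]
      have := hsub this
      simp at this
  intro i j hij
  rcases lt_trichotomy (v i) (v j) with h | h | h
  · exact absurd hij (Nat.ne_of_lt (key _ _ h))
  · exact hv h
  · exact absurd hij.symm (Nat.ne_of_lt (key _ _ h))

lemma card_rnk_lt {n k : ℕ} (hk : k ≤ n) (v : Fin n → ℝ) (hv : Function.Injective v) :
    (Finset.univ.filter (fun j => rnk v j < k)).card = k := by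
  have hn : 0 < n ∨ n = 0 := Or.symm (Nat.eq_zero_or_pos n)
  let f : Fin n → Fin n := fun j => ⟨rnk v j, rnk_lt v j⟩
  have hfinj : Function.Injective f := by
    intro i j hij
    exact rnk_inj v hv (congrArg Fin.val hij)
  have hfsurj : Function.Surjective f := Finite.surjective_of_injective hfinj
  have h1 : (Finset.univ.filter (fun j => rnk v j < k)).card
      = (Finset.univ.filter (fun t : Fin n => (t : ℕ) < k)).card := by
    refine Finset.card_bij (fun j _ => f j) ?_ ?_ ?_
    · intro a ha
      simp only [mem_filter, mem_univ, true_and] at ha ⊢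
      exact ha
    · intro a _ b _ h
      exact hfinj h
    · intro b hb
      obtain ⟨a, ha⟩ := hfsurj b
      refine ⟨a, ?_, ha⟩
      simp only [mem_filter, mem_univ, true_and] at hb ⊢
      rw [← ha] at hb
      exact hb
  rw [h1]
  have h2 : (Finset.univ.filter (fun t : Fin n => (t : ℕ) < k)).card = (Finset.range k).card := by
    refine Finset.card_bij (fun t _ => (t : ℕ)) ?_ ?_ ?_
    · intro a ha
      simp only [mem_filter, mem_univ, true_and] at ha
      simpa using ha
    · intro a _ b _ h
      exact Fin.ext h
    · intro b hb
      simp only [Finset.mem_range] at hb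
      exact ⟨⟨b, lt_of_lt_of_le hb hk⟩, by simp [hb], rfl⟩
  rw [h2, Finset.card_range]

lemma sorted_getD_le_iff (l : List ℝ) (hl : l.Pairwise (· ≤ ·)) (j : ℕ) (hj : j < l.length)
    (x : ℝ) : x ≤ l.getD j 0 ↔ l.countP (fun y => decide (y < x)) ≤ j := by
  have hget : l.getD j 0 = l.get ⟨j, hj⟩ := by simp [List.getD_eq_getElem?_getD, hj]
  have hmono : ∀ a b : Fin l.length, a ≤ b → l.get a ≤ l.get b := by
    intro a b hab
    rcases eq_or_lt_of_le hab with h | h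
    · rw [h]
    · exact List.pairwise_iff_get.1 hl a b h
  constructor
  · intro hx
    have hsplit : l = l.take j ++ l.drop j := (List.take_append_drop j l).symm
    have hcount : l.countP (fun y => decide (y < x))
        = (l.take j).countP (fun y => decide (y < x))
          + (l.drop j).countP (fun y => decide (y < x)) := by
      conv_lhs => rw [hsplit]
      exact List.countP_append
    have hdrop : (l.drop j).countP (fun y => decide (y < x)) = 0 := by
      rw [List.countP_eq_zero]
      intro y hy
      obtain ⟨i, hi⟩ := List.get_of_mem hy
      have hlen : i.val + j < l.length := by
        have h1 := i.isLt
        have h2 : (List.drop j l).length = l.length - j := List.length_drop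
        omega
      have : y = l.get ⟨j + i.val, by omega⟩ := by
        rw [← hi]
        simp [List.get_eq_getElem]
      have hle : l.get ⟨j, hj⟩ ≤ y := by
        rw [this]
        exact hmono _ _ (by simp [Fin.le_def])
      simp only [decide_eq_true_eq]
      exact not_lt.2 (le_trans (hget ▸ hx) hle)
    rw [hcount, hdrop, Nat.add_zero]
    calc (l.take j).countP _ ≤ (l.take j).length := List.countP_le_length
      _ ≤ j := by simp
  · intro hc
    by_contra hx
    push_neg at hx
    rw [hget] at hx
    have hsub : (l.take (j+1)).Sublist l := List.take_sublist _ _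
    have htlen : (l.take (j+1)).length = j + 1 := by
      rw [List.length_take]
      omega
    have hall : (l.take (j+1)).countP (fun y => decide (y < x)) = j + 1 := by
      have hloc : ∀ y ∈ l.take (j+1), (fun y => decide (y < x)) y = true := ?_
      · rw [List.countP_eq_length.2 hloc, htlen]
      intro y hy
      obtain ⟨i, hi⟩ := List.get_of_mem hy
      have hilt : i.val < j + 1 := by have := i.isLt; omega
      have : y = l.get ⟨i.val, by omega⟩ := by
        rw [← hi]; simp [List.get_eq_getElem]
      have hle : y ≤ l.get ⟨j, hj⟩ := by
        rw [this]
        exact hmono _ _ (by simp [Fin.le_def]; omega)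
      simp only [decide_eq_true_eq]
      exact lt_of_le_of_lt hle hx
    have := hsub.countP_le (p := fun y => decide (y < x))
    omega

open MeasureTheory

/-- Split-conformal quantile lemma (upper bound): if `E 0, ..., E m` are
exchangeable real-valued random variables and `q` is the `⌈(m+1)(1-α)⌉`-th
smallest value among the first `m` of them, and the `E i` are a.s. distinct,
then `P(E m ≤ q) ≤ 1 - α + 1/(m+1)`. -/
theorem conformal_coverage_upper_bound
    {Ω : Type*} [MeasurableSpace Ω] (μ : Measure Ω) [IsProbabilityMeasure μ]
    (m : ℕ) (hm : 0 < m) (α : ℝ) (hα : 0 < α) (hα1 : α < 1)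
    (E : Fin (m + 1) → Ω → ℝ) (hE : ∀ i, Measurable (E i))
    (hdistinct : ∀ᵐ ω ∂μ, Function.Injective (fun i => E i ω))
    (hexch : ∀ σ : Equiv.Perm (Fin (m + 1)),
      Measure.map (fun ω => fun i => E (σ i) ω) μ
        = Measure.map (fun ω => fun i => E i ω) μ)
    (k : ℕ) (hk : k = ⌈((m : ℝ) + 1) * (1 - α)⌉₊) (hkm : k ≤ m)
    (q : Ω → ℝ)
    (hq : ∀ ω, q ω =
      ((((Finset.univ : Finset (Fin m)).val.map
          (fun i => E (Fin.castSucc i) ω)).sort (· ≤ ·)).getD (k - 1) 0)) :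
    (μ {ω | E (Fin.last m) ω ≤ q ω}).toReal ≤ 1 - α + 1 / ((m : ℝ) + 1) := by
  classical
  have hk1 : 1 ≤ k := by
    rw [hk, Nat.one_le_ceil_iff]
    nlinarith [Nat.cast_nonneg (α := ℝ) m]
  have hkm1 : k ≤ m + 1 := le_trans hkm (Nat.le_succ m)
  set X : Ω → (Fin (m+1) → ℝ) := fun ω i => E i ω with hX
  have hXmeas : Measurable X := measurable_pi_lambda _ (fun i => hE i)
  set S : Fin (m+1) → Set (Fin (m+1) → ℝ) := fun j => {v | rnk v j < k} with hS
  have hrnkmeas : ∀ j : Fin (m+1), Measurable (fun v : Fin (m+1) → ℝ => rnk v j) := by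
    intro j
    have heq : (fun v : Fin (m+1) → ℝ => rnk v j)
        = fun v => ∑ i : Fin (m+1), if v i < v j then 1 else 0 := by
      funext v; rw [rnk, Finset.card_filter]
    rw [heq]
    apply Finset.measurable_sum
    intro i _
    exact Measurable.ite
      (measurableSet_lt (measurable_pi_apply i) (measurable_pi_apply j))
      measurable_const measurable_const
  have hSmeas : ∀ j, MeasurableSet (S j) := by
    intro j
    have : S j = (fun v => rnk v j) ⁻¹' (Set.Iio k) := rfl
    rw [this]
    exact (hrnkmeas j) measurableSet_Iio
  set B : Fin (m+1) → Set Ω := fun j => X ⁻¹' (S j) with hB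
  have hBmeas : ∀ j, MeasurableSet (B j) := fun j => hXmeas (hSmeas j)
  have hBeq : ∀ j, μ (B j) = μ (B (Fin.last m)) := by
    intro j
    set σ := Equiv.swap j (Fin.last m) with hσ
    have hXσ : Measurable (fun ω => fun i => E (σ i) ω) :=
      measurable_pi_lambda _ (fun i => hE (σ i))
    have hpre : (fun ω => fun i => E (σ i) ω) ⁻¹' (S (Fin.last m)) = B j := by
      ext ω
      simp only [hB, hS, Set.mem_preimage, Set.mem_setOf_eq]
      have hr : rnk (fun i => E (σ i) ω) (Fin.last m) = rnk (X ω) j := by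
        rw [rnk, rnk, Finset.card_filter, Finset.card_filter]
        have hσlast : σ (Fin.last m) = j := Equiv.swap_apply_right _ _
        calc ∑ i, (if E (σ i) ω < E (σ (Fin.last m)) ω then 1 else 0)
            = ∑ i, (if E (σ i) ω < E j ω then 1 else 0) := by rw [hσlast]
          _ = ∑ i, (if E i ω < E j ω then 1 else 0) :=
              Equiv.sum_comp σ (fun i => if E i ω < E j ω then 1 else 0)
      rw [hr]
    calc μ (B j) = μ ((fun ω => fun i => E (σ i) ω) ⁻¹' (S (Fin.last m))) := by rw [hpre]
      _ = (μ.map (fun ω => fun i => E (σ i) ω)) (S (Fin.last m)) :=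
          (Measure.map_apply hXσ (hSmeas _)).symm
      _ = (μ.map X) (S (Fin.last m)) := by rw [hexch σ]
      _ = μ (X ⁻¹' S (Fin.last m)) := Measure.map_apply hXmeas (hSmeas _)
      _ = μ (B (Fin.last m)) := rfl
  have hindic : ∀ ω, (∑ j, (B j).indicator (fun _ => (1:ENNReal)) ω)
      = ((Finset.univ.filter (fun j => rnk (X ω) j < k)).card : ENNReal) := by
    intro ω
    rw [Finset.card_filter]
    push_cast
    simp only [hB, hS, Set.indicator_apply, Set.mem_preimage, Set.mem_setOf_eq]
  have hae : (fun ω => ∑ j, (B j).indicator (fun _ => (1:ENNReal)) ω)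
      =ᵐ[μ] (fun _ => (k:ENNReal)) := by
    filter_upwards [hdistinct] with ω hω
    rw [hindic ω, card_rnk_lt hkm1 _ hω]
  have hsum : ∑ j, μ (B j) = (k : ENNReal) := by
    calc ∑ j, μ (B j)
        = ∑ j, ∫⁻ ω, (B j).indicator (fun _ => (1:ENNReal)) ω ∂μ := by
          exact Finset.sum_congr rfl (fun j _ => (lintegral_indicator_one (hBmeas j)).symm)
      _ = ∫⁻ ω, ∑ j, (B j).indicator (fun _ => (1:ENNReal)) ω ∂μ :=
          (lintegral_finset_sum _ (fun j _ => measurable_const.indicator (hBmeas j))).symm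
      _ = ∫⁻ _, (k:ENNReal) ∂μ := lintegral_congr_ae hae
      _ = (k:ENNReal) := by simp
  have hconst : ((m:ENNReal)+1) * μ (B (Fin.last m)) = (k : ENNReal) := by
    rw [← hsum]
    rw [Finset.sum_congr rfl (fun j _ => hBeq j), Finset.sum_const, Finset.card_univ]
    simp [nsmul_eq_mul, mul_comm]
  have hμB : μ (B (Fin.last m)) = (k : ENNReal) / ((m:ENNReal)+1) :=
    (ENNReal.eq_div_iff (by simp) (by simp)).2 hconst
  have hset : {ω | E (Fin.last m) ω ≤ q ω} = B (Fin.last m) := by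
    ext ω
    simp only [hB, hS, Set.mem_setOf_eq, Set.mem_preimage]
    rw [hq ω]
    set c := E (Fin.last m) ω with hc
    set s : Multiset ℝ := (Finset.univ : Finset (Fin m)).val.map
      (fun i => E (Fin.castSucc i) ω) with hs
    set l := s.sort (· ≤ ·) with hl
    have hsorted : l.Pairwise (· ≤ ·) := Multiset.pairwise_sort _ _
    have hlen : l.length = m := by
      rw [hl, Multiset.length_sort, hs, Multiset.card_map]
      simp
    have hkm' : k - 1 < l.length := by omega
    rw [sorted_getD_le_iff l hsorted (k-1) hkm' c]
    have h1 : l.countP (fun y => decide (y < c)) = Multiset.countP (fun y => y < c) s := by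
      rw [hl, ← Multiset.coe_countP, Multiset.sort_eq]
    have h3 : Multiset.countP (fun y => y < c) s
        = (Finset.univ.filter (fun i : Fin m => E (Fin.castSucc i) ω < c)).card := by
      rw [hs, Multiset.countP_map]
      rfl
    have h2 : rnk (X ω) (Fin.last m)
        = (Finset.univ.filter (fun i : Fin m => E (Fin.castSucc i) ω < c)).card := by
      rw [rnk, Finset.card_filter, Finset.card_filter, Fin.sum_univ_castSucc]
      simp [hX, hc]
    rw [h1, h3, ← h2]
    omega
  rw [hset, hμB]
  have htoR : ((k : ENNReal) / ((m:ENNReal)+1)).toReal = (k:ℝ) / ((m:ℝ)+1) := by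
    rw [ENNReal.toReal_div]
    congr 1 <;> simp
  rw [htoR]
  have hpos : (0:ℝ) < (m:ℝ)+1 := by positivity
  have hkle : (k:ℝ) ≤ ((m:ℝ)+1)*(1-α) + 1 := by
    rw [hk]
    exact le_of_lt (Nat.ceil_lt_add_one (by nlinarith [Nat.cast_nonneg (α := ℝ) m]))
  rw [div_le_iff₀ hpos]
  have : (1 - α + 1 / ((m:ℝ)+1)) * ((m:ℝ)+1) = ((m:ℝ)+1)*(1-α) + 1 := by
    field_simp
  rw [this]
  exact hkle
end

section
/- Let K ⊆ ℝ^r be a nonempty closed convex set, γ ≥ 0, S = { z : dist(z, K) ≤ γ }, and y ∈ ℝ^r with y ∉ S. Let y* be the (unique) metric projection of y onto K. Then the point p = y* + γ·(y - y*)/‖y - y*‖₂ is the unique metric projection of y onto S, i.e. p ∈ S and ‖y - p‖₂ = dist(y, S) = ‖y - y*‖₂ - γ. -/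
open Metric


/-- Projection onto the inflated set `S = { z | dist(z, K) ≤ γ }` of a point
`y ∉ S`: if `y*` is the metric projection of `y` onto the nonempty closed
convex set `K`, then `p = y* + γ (y - y*)/‖y - y*‖` is the unique metric
projection of `y` onto `S`, with `dist(y, S) = ‖y - y*‖ - γ`. -/
theorem projection_onto_inflated_set
    (r : ℕ) (K : Set (EuclideanSpace ℝ (Fin r))) (hne : K.Nonempty)
    (hcl : IsClosed K) (hconv : Convex ℝ K) (γ : ℝ) (hγ : 0 ≤ γ)
    (y ystar : EuclideanSpace ℝ (Fin r))
    (hy : y ∉ {z : EuclideanSpace ℝ (Fin r) | Metric.infDist z K ≤ γ})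
    (hstar : ystar ∈ K) (hproj : dist y ystar = Metric.infDist y K) :
    (ystar + (γ / ‖y - ystar‖) • (y - ystar))
        ∈ {z : EuclideanSpace ℝ (Fin r) | Metric.infDist z K ≤ γ} ∧
    dist y (ystar + (γ / ‖y - ystar‖) • (y - ystar))
        = Metric.infDist y {z : EuclideanSpace ℝ (Fin r) | Metric.infDist z K ≤ γ} ∧
    Metric.infDist y {z : EuclideanSpace ℝ (Fin r) | Metric.infDist z K ≤ γ}
        = ‖y - ystar‖ - γ ∧
    ∀ q ∈ {z : EuclideanSpace ℝ (Fin r) | Metric.infDist z K ≤ γ},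
      dist y q = Metric.infDist y {z : EuclideanSpace ℝ (Fin r) | Metric.infDist z K ≤ γ} →
        q = ystar + (γ / ‖y - ystar‖) • (y - ystar) := by
  set S : Set (EuclideanSpace ℝ (Fin r)) := {z | Metric.infDist z K ≤ γ} with hS
  set d : ℝ := ‖y - ystar‖ with hd
  have hdd : dist y ystar = d := by rw [dist_eq_norm]
  have hγd : γ < d := by
    have := hy; simp only [hS, Set.mem_setOf_eq, not_le] at this
    rw [← hproj] at this; linarith [hdd ▸ this]
  have hd0 : 0 < d := lt_of_le_of_lt hγ hγd
  set p := ystar + (γ / d) • (y - ystar) with hp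
  -- p ∈ S
  have hdistp : dist p ystar = γ := by
    rw [dist_eq_norm]
    have : p - ystar = (γ / d) • (y - ystar) := by rw [hp]; abel
    rw [this, norm_smul, Real.norm_eq_abs, abs_of_nonneg (by positivity)]
    field_simp
    rw [← hd]
  have hpS : p ∈ S := by
    simp only [hS, Set.mem_setOf_eq]
    calc infDist p K ≤ dist p ystar := infDist_le_dist_of_mem hstar
    _ = γ := hdistp
  -- dist y p = d - γ
  have hdyp : dist y p = d - γ := by
    rw [dist_eq_norm]
    have : y - p = (1 - γ / d) • (y - ystar) := by
      rw [hp, sub_smul, one_smul]; abel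
    rw [this, norm_smul, Real.norm_eq_abs, ← hd,
      abs_of_nonneg (by rw [sub_nonneg]; exact (div_le_one hd0).2 hγd.le)]
    field_simp
  -- lower bound for dist to S
  have hlb : ∀ q ∈ S, d - γ ≤ dist y q := by
    intro q hq
    have h1 : infDist y K ≤ infDist q K + dist y q := infDist_le_infDist_add_dist
    have h2 : infDist q K ≤ γ := hq
    have : d ≤ infDist y K := by rw [← hproj, hdd]
    linarith
  have hds : infDist y S = d - γ := by
    apply le_antisymm
    · calc infDist y S ≤ dist y p := infDist_le_dist_of_mem hpS
      _ = d - γ := hdyp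
    · refine le_of_not_gt fun h => ?_
      obtain ⟨q, hq, hlt⟩ := (infDist_lt_iff ⟨p, hpS⟩).1 h
      exact absurd (hlb q hq) (not_le.2 hlt)
  refine ⟨hpS, by rw [hdyp, hds], hds, ?_⟩
  -- uniqueness
  intro q hq hqd
  rw [hds] at hqd
  have hqK : infDist q K = γ := by
    have h1 : infDist y K ≤ infDist q K + dist y q := infDist_le_infDist_add_dist
    have : d ≤ infDist y K := by rw [← hproj, hdd]
    have h2 : infDist q K ≤ γ := hq
    linarith
  obtain ⟨a, haK, hqa⟩ := hcl.exists_infDist_eq_dist hne q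
  rw [hqK] at hqa
  have hya : dist y a = d := by
    apply le_antisymm
    · calc dist y a ≤ dist y q + dist q a := dist_triangle y q a
      _ = d := by rw [hqd, ← hqa]; ring
    · calc d = infDist y K := by rw [← hproj, hdd]
      _ ≤ dist y a := infDist_le_dist_of_mem haK
  -- a = ystar via parallelogram law
  have haystar : a = ystar := by
    have hm : midpoint ℝ a ystar ∈ K :=
      hconv.segment_subset haK hstar (midpoint_mem_segment a ystar)
    have hdm : d ≤ ‖y - midpoint ℝ a ystar‖ := by
      have : d ≤ dist y (midpoint ℝ a ystar) := by
        calc d = infDist y K := by rw [← hproj, hdd]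
        _ ≤ _ := infDist_le_dist_of_mem hm
      rwa [dist_eq_norm] at this
    have hpar := parallelogram_law_with_norm ℝ (y - a) (y - ystar)
    have e1 : (y - a) + (y - ystar) = (2 : ℝ) • (y - midpoint ℝ a ystar) := by
      rw [midpoint_eq_smul_add, smul_sub, smul_smul]
      norm_num
      module
    have e2 : (y - a) - (y - ystar) = ystar - a := by abel
    rw [e1, e2, norm_smul, Real.norm_ofNat] at hpar
    have hna : ‖y - a‖ = d := by rw [← dist_eq_norm, hya]
    have h0 : ‖ystar - a‖ = 0 := by
      nlinarith [norm_nonneg (ystar - a), norm_nonneg (y - midpoint ℝ a ystar),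
        hd.symm]
    have := sub_eq_zero.mp (norm_eq_zero.mp h0)
    exact this.symm
  subst haystar
  -- q between y and a, so q = p
  have htri : dist y q + dist q a = dist y a := by rw [hqd, hya, ← hqa]; ring
  have hw : Wbtw ℝ y q a := dist_add_dist_eq_iff.mp htri
  obtain ⟨t, ⟨ht0, ht1⟩, hqe⟩ := hw
  -- hqe : AffineMap.lineMap y a t = q
  have hqe' : q = y + t • (a - y) := by
    rw [← hqe]; simp [AffineMap.lineMap_apply]; abel
  have hdq : dist y q = t * d := by
    rw [dist_eq_norm, hqe']
    have : y - (y + t • (a - y)) = t • (y - a) := by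
      rw [smul_sub]; module
    rw [this, norm_smul, Real.norm_eq_abs, abs_of_nonneg ht0, ← dist_eq_norm, hya]
  have htval : t = (d - γ) / d := by
    rw [hqd] at hdq; field_simp at hdq ⊢; linarith
  rw [hqe', htval, hp]
  have : γ / d = 1 - (d - γ)/d := by field_simp; ring
  rw [this]
  module
end
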